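/- Let Γ be a pre-automatic structure over a finite alphabet A with an interpretation σ : A⁺ → S. For nonempty words u, v ∈ A⁺, the elements σ(u) and σ(v) are right translationally equivalent in S if and only if L_u = L_v. In particular, whether two words represent right translationally equivalent elements is independent of the choice of interpretation: if τ : A⁺ → T is another interpretation of Γ, then σ(u), σ(v) are right translationally equivalent in S if and only if τ(u), τ(v) are right translationally equivalent in T. -/
import Mathlib


universe u v

/-- A pre-automatic structure over an alphabet `A`: a language `L` of nonempty words
(elements of the free semigroup `A⁺`), a relation `L₌ ⊆ L × L`, and for each letter
`a ∈ A` a relation `Lₐ ⊆ L × L`. -/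
structure PreAutomaticStructure (A : Type u) where
  L : Set (FreeSemigroup A)
  Leq : Set (FreeSemigroup A × FreeSemigroup A)
  Lletter : A → Set (FreeSemigroup A × FreeSemigroup A)
  Leq_sub : Leq ⊆ L ×ˢ L
  Lletter_sub : ∀ a, Lletter a ⊆ L ×ˢ L

/-- An interpretation of a pre-automatic structure with respect to a semigroup `S`:
a semigroup homomorphism `σ : A⁺ → S` such that (i) `σ(L) = S`, (ii) `L₌` captures
equality of representatives, (iii) `Lₐ` captures right multiplication by `a`. -/
structure IsInterpretation {A : Type u} {S : Type v} [Semigroup S]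
    (Γ : PreAutomaticStructure A) (σ : FreeSemigroup A →ₙ* S) : Prop where
  surj : ⇑σ '' Γ.L = Set.univ
  eq_iff : ∀ u ∈ Γ.L, ∀ v ∈ Γ.L, ((u, v) ∈ Γ.Leq ↔ σ u = σ v)
  step_iff : ∀ (a : A), ∀ u ∈ Γ.L, ∀ v ∈ Γ.L,
    ((u, v) ∈ Γ.Lletter a ↔ σ (u * FreeSemigroup.of a) = σ v)

/-- `σ` is consistent with the assignment of generators `ι : A → L`. -/
def ConsistentWith {A : Type u} {S : Type v} [Semigroup S] (Γ : PreAutomaticStructure A)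
    (σ : FreeSemigroup A →ₙ* S) (ι : A → FreeSemigroup A) : Prop :=
  (∀ a, ι a ∈ Γ.L) ∧ ∀ a, σ (ι a) = σ (FreeSemigroup.of a)

/-- `ι : A → L` is an assignment of generators: some interpretation is consistent with it. -/
def IsAssignment {A : Type u} (Γ : PreAutomaticStructure A)
    (ι : A → FreeSemigroup A) : Prop :=
  ∃ (T : Type v) (inst : Semigroup T)
    (τ : @MulHom (FreeSemigroup A) T _ inst.toMul),
    @IsInterpretation A T inst Γ τ ∧ @ConsistentWith A T inst Γ τ ι

/-- Composition of relations: `(u, v) ∈ R ∘ R'` iff `∃ x, (u, x) ∈ R ∧ (x, v) ∈ R'`. -/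
def relComp {W : Type*} (R R' : Set (W × W)) : Set (W × W) :=
  {p | ∃ x, (p.1, x) ∈ R ∧ (x, p.2) ∈ R'}

/-- The inverse of a relation. -/
def relInv {W : Type*} (R : Set (W × W)) : Set (W × W) := {p | (p.2, p.1) ∈ R}

/-- `L_w` for a word `w` given as a list of letters: `L_ε = L₌` and
`L_{a₁⋯aₙ} = L_{a₁} ∘ ⋯ ∘ L_{aₙ}`. -/
def PreAutomaticStructure.LwordList {A : Type u} (Γ : PreAutomaticStructure A) :
    List A → Set (FreeSemigroup A × FreeSemigroup A)
  | [] => Γ.Leq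
  | [a] => Γ.Lletter a
  | a :: b :: rest => relComp (Γ.Lletter a) (Γ.LwordList (b :: rest))

/-- `L_w` for a nonempty word `w ∈ A⁺`. -/
def PreAutomaticStructure.Lword {A : Type u} (Γ : PreAutomaticStructure A)
    (w : FreeSemigroup A) : Set (FreeSemigroup A × FreeSemigroup A) :=
  Γ.LwordList (w.head :: w.tail)

/-- Two elements of a semigroup are right translationally equivalent if they act
identically by right translation. -/
def RTEquiv {S : Type v} [Semigroup S] (s t : S) : Prop := ∀ x : S, x * s = x * t

lemma surj_exists {A : Type u} {S : Type v} [Semigroup S] {Γ : PreAutomaticStructure A}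
    {σ : FreeSemigroup A →ₙ* S} (hσ : IsInterpretation Γ σ) (s : S) :
    ∃ z ∈ Γ.L, σ z = s := by
  have := hσ.surj
  have : s ∈ ⇑σ '' Γ.L := by rw [this]; trivial
  obtain ⟨z, hz, hzs⟩ := this
  exact ⟨z, hz, hzs⟩

lemma LwordList_mem {A : Type u} {S : Type v} [Semigroup S] {Γ : PreAutomaticStructure A}
    {σ : FreeSemigroup A →ₙ* S} (hσ : IsInterpretation Γ σ) :
    ∀ (l : List A) (a : A) (x y : FreeSemigroup A),
      ((x, y) ∈ Γ.LwordList (a :: l) ↔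
        x ∈ Γ.L ∧ y ∈ Γ.L ∧ σ (x * ⟨a, l⟩) = σ y) := by
  intro l
  induction l with
  | nil =>
    intro a x y
    constructor
    · intro h
      have hm := Γ.Lletter_sub a h
      exact ⟨hm.1, hm.2, ((hσ.step_iff a x hm.1 y hm.2).1 h)⟩
    · rintro ⟨hx, hy, h⟩
      exact (hσ.step_iff a x hx y hy).2 h
  | cons b r ih =>
    intro a x y
    constructor
    · rintro ⟨z, h1, h2⟩
      have hm := Γ.Lletter_sub a h1
      obtain ⟨hz, hy, hzy⟩ := (ih b z y).1 h2
      refine ⟨hm.1, hy, ?_⟩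
      have hxz : σ (x * FreeSemigroup.of a) = σ z := (hσ.step_iff a x hm.1 z hz).1 h1
      have : (⟨a, b :: r⟩ : FreeSemigroup A) = FreeSemigroup.of a * ⟨b, r⟩ := rfl
      rw [this, ← mul_assoc, map_mul, hxz, ← map_mul, hzy]
    · rintro ⟨hx, hy, h⟩
      obtain ⟨z, hz, hzeq⟩ := surj_exists hσ (σ (x * FreeSemigroup.of a))
      refine ⟨z, (hσ.step_iff a x hx z hz).2 hzeq.symm, (ih b z y).2 ⟨hz, hy, ?_⟩⟩
      have : (⟨a, b :: r⟩ : FreeSemigroup A) = FreeSemigroup.of a * ⟨b, r⟩ := rfl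
      rw [this, ← mul_assoc] at h
      rw [map_mul, hzeq, ← map_mul, h]

lemma Lword_mem {A : Type u} {S : Type v} [Semigroup S] {Γ : PreAutomaticStructure A}
    {σ : FreeSemigroup A →ₙ* S} (hσ : IsInterpretation Γ σ) (w x y : FreeSemigroup A) :
    ((x, y) ∈ Γ.Lword w ↔ x ∈ Γ.L ∧ y ∈ Γ.L ∧ σ (x * w) = σ y) := by
  have : (⟨w.head, w.tail⟩ : FreeSemigroup A) = w := rfl
  rw [PreAutomaticStructure.Lword, LwordList_mem hσ, this]

lemma RTE_iff_Lword {A : Type u} {S : Type v} [Semigroup S] {Γ : PreAutomaticStructure A}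
    {σ : FreeSemigroup A →ₙ* S} (hσ : IsInterpretation Γ σ) (u v : FreeSemigroup A) :
    RTEquiv (σ u) (σ v) ↔ Γ.Lword u = Γ.Lword v := by
  constructor
  · intro h
    ext ⟨x, y⟩
    rw [Lword_mem hσ, Lword_mem hσ]
    have : σ (x * u) = σ (x * v) := by rw [map_mul, map_mul, h (σ x)]
    rw [this]
  · intro h x
    obtain ⟨z, hz, hzeq⟩ := surj_exists hσ x
    obtain ⟨y, hy, hyeq⟩ := surj_exists hσ (σ z * σ u)
    have h1 : (z, y) ∈ Γ.Lword u := (Lword_mem hσ u z y).2 ⟨hz, hy, by rw [map_mul, hyeq]⟩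
    rw [h] at h1
    obtain ⟨_, _, h2⟩ := (Lword_mem hσ v z y).1 h1
    rw [map_mul] at h2
    rw [← hzeq, ← hyeq, ← h2]

/-- `σ(u)` and `σ(v)` are right translationally equivalent iff `L_u = L_v`; in
particular right translational equivalence of the represented elements is independent
of the choice of interpretation. -/
theorem stmt_4 {A : Type*} [Finite A] {S T : Type*} [Semigroup S] [Semigroup T]
    (Γ : PreAutomaticStructure A)
    (σ : FreeSemigroup A →ₙ* S) (hσ : IsInterpretation Γ σ)
    (τ : FreeSemigroup A →ₙ* T) (hτ : IsInterpretation Γ τ)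
    (u v : FreeSemigroup A) :
    (RTEquiv (σ u) (σ v) ↔ Γ.Lword u = Γ.Lword v) ∧
    (RTEquiv (σ u) (σ v) ↔ RTEquiv (τ u) (τ v)) := by
  refine ⟨RTE_iff_Lword hσ u v, (RTE_iff_Lword hσ u v).trans (RTE_iff_Lword hτ u v).symm⟩
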